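/- There exist absolute constants C > 0 and C' > 0 such that the following holds. Let n ≥ 2 and d ≥ 1 be integers, let ε > 0, and let q be a prime power such that the characteristic of 𝔽_q is at least d(d−1)+1 and q ≥ C·(d·2^d/ε + d^4/ε^2). Then there exist a nonempty finite set S with log₂|S| ≤ C'·(d·log₂ n + log₂ q) and a function G : S → 𝔽_q^{n+1} such that for every polynomial f ∈ 𝔽_q[x_1,…,x_n,y] of total degree at most d, (1/2)·Σ_{a∈𝔽_q} | Pr_{x ← uniform on 𝔽_q^{n+1}}[f(x)=a] − Pr_{s ← uniform on S}[f(G(s))=a] | ≤ ε. -/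

import Mathlib

open MvPolynomial


lemma exp_quad {u : ℝ} (hu : |u| ≤ 1) : Real.exp u ≤ 1 + u + u ^ 2 := by
  have h := Real.exp_bound hu (n := 2) (by norm_num)
  have hs : ∑ m ∈ Finset.range 2, u ^ m / m.factorial = 1 + u := by
    simp [Finset.sum_range_succ]
  rw [hs] at h
  have hfac : ((Nat.succ 2 : ℕ) : ℝ) / ((Nat.factorial 2 : ℕ) * (2:ℕ)) = 3/4 := by
    norm_num [Nat.factorial]
  rw [hfac, sq_abs] at h
  have := (abs_le.1 h).2
  nlinarith [sq_nonneg u]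

lemma chernoff_count {V : Type*} [Fintype V] [Nonempty V] (N : ℕ) (g : V → ℝ)
    (hg0 : ∀ x, 0 ≤ g x) (hg1 : ∀ x, g x ≤ 1) {t : ℝ} (ht0 : 0 ≤ t) (ht2 : t ≤ 2) :
    ((Finset.univ.filter (fun ω : Fin N → V =>
        (N : ℝ) * ((∑ x, g x) / (Fintype.card V : ℝ)) + (N : ℝ) * t ≤ ∑ i, g (ω i))).card : ℝ)
      ≤ (Fintype.card V : ℝ) ^ N * Real.exp (-((N : ℝ) * t ^ 2) / 4) := by
  classical
  set v : ℝ := (Fintype.card V : ℝ) with hv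
  have hv0 : 0 < v := by
    rw [hv]; exact_mod_cast Fintype.card_pos
  set p : ℝ := (∑ x, g x) / v with hp
  set l : ℝ := t / 2 with hl
  have hl0 : 0 ≤ l := by rw [hl]; linarith
  have hl1 : l ≤ 1 := by rw [hl]; linarith
  have hsum0 : 0 ≤ ∑ x, g x := Finset.sum_nonneg fun x _ => hg0 x
  have hsum_le : ∑ x, g x ≤ v := by
    have := Finset.sum_le_card_nsmul Finset.univ g 1 (fun x _ => hg1 x)
    simpa [hv] using this
  have hp0 : 0 ≤ p := by rw [hp]; positivity
  have hp1 : p ≤ 1 := by rw [hp, div_le_one hv0]; exact hsum_le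
  have hvp : v * p = ∑ x, g x := by rw [hp]; field_simp
  have habs : ∀ x : V, |g x - p| ≤ 1 := by
    intro x
    rw [abs_le]
    constructor <;> nlinarith [hg0 x, hg1 x]
  -- step 1 : card ≤ sum of exponentials
  have step1 : ((Finset.univ.filter (fun ω : Fin N → V =>
        (N : ℝ) * p + (N : ℝ) * t ≤ ∑ i, g (ω i))).card : ℝ)
      ≤ ∑ ω : Fin N → V, Real.exp (l * ((∑ i, g (ω i)) - ((N:ℝ)*p + (N:ℝ)*t))) := by
    rw [Finset.card_eq_sum_ones]
    push_cast
    refine le_trans (Finset.sum_le_sum (fun ω hω => ?_))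
      (Finset.sum_le_sum_of_subset_of_nonneg (Finset.subset_univ _) (fun ω _ _ => (Real.exp_pos _).le))
    have hmem := (Finset.mem_filter.1 hω).2
    have : (0:ℝ) ≤ l * ((∑ i, g (ω i)) - ((N:ℝ)*p + (N:ℝ)*t)) := by
      apply mul_nonneg hl0; linarith
    calc (1:ℝ) = Real.exp 0 := (Real.exp_zero).symm
      _ ≤ _ := Real.exp_le_exp.2 this
  -- expand each exponential as a product
  have expand : ∀ ω : Fin N → V, Real.exp (l * ((∑ i, g (ω i)) - ((N:ℝ)*p + (N:ℝ)*t)))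
      = Real.exp (-(l*((N:ℝ)*t))) * ∏ i, Real.exp (l * (g (ω i) - p)) := by
    intro ω
    rw [← Real.exp_sum, ← Real.exp_add]
    congr 1
    have hsub : ∑ i : Fin N, l * (g (ω i) - p)
        = l * (∑ i, g (ω i)) - (N:ℝ) * (l * p) := by
      rw [← Finset.mul_sum, Finset.sum_sub_distrib, Finset.sum_const, Finset.card_univ,
        Fintype.card_fin]
      ring
    rw [hsub]; ring
  -- per-point mgf bound
  have point : ∑ x, Real.exp (l * (g x - p)) ≤ v * Real.exp (l^2) := by
    have h1 : ∑ x, Real.exp (l * (g x - p))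
        ≤ ∑ x, (1 + l * (g x - p) + (l * (g x - p))^2) := by
      refine Finset.sum_le_sum (fun x _ => exp_quad ?_)
      rw [abs_mul, abs_of_nonneg hl0]
      calc l * |g x - p| ≤ 1 * 1 :=
        mul_le_mul hl1 (habs x) (abs_nonneg _) zero_le_one
        _ = 1 := by ring
    have h2 : ∑ x, (1 + l * (g x - p) + (l * (g x - p))^2)
        = v + l * ((∑ x, g x) - v * p) + l^2 * ∑ x, (g x - p)^2 := by
      rw [Finset.sum_add_distrib, Finset.sum_add_distrib, Finset.sum_const,
        Finset.card_univ, ← Finset.mul_sum, Finset.sum_sub_distrib, Finset.sum_const,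
        Finset.card_univ]
      have : ∑ x, (l * (g x - p))^2 = l^2 * ∑ x, (g x - p)^2 := by
        rw [Finset.mul_sum]
        exact Finset.sum_congr rfl fun x _ => by ring
      rw [this, hv]
      push_cast
      ring
    have h3 : ∑ x, (g x - p)^2 ≤ v := by
      have := Finset.sum_le_card_nsmul Finset.univ (fun x => (g x - p)^2) 1
        (fun x _ => by
          have h := abs_le.1 (habs x)
          show (g x - p)^2 ≤ 1
          nlinarith [h.1, h.2])
      simpa [hv] using this
    have h4 : v + l * ((∑ x, g x) - v * p) + l^2 * ∑ x, (g x - p)^2 ≤ v * (1 + l^2) := by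
      rw [hvp]
      have : l^2 * ∑ x, (g x - p)^2 ≤ l^2 * v :=
        mul_le_mul_of_nonneg_left h3 (sq_nonneg l)
      nlinarith
    have h5 : v * (1 + l^2) ≤ v * Real.exp (l^2) := by
      apply mul_le_mul_of_nonneg_left _ hv0.le
      have := Real.add_one_le_exp (l^2)
      linarith
    linarith
  -- put it together
  refine le_trans step1 ?_
  have sum_eq : ∑ ω : Fin N → V, Real.exp (l * ((∑ i, g (ω i)) - ((N:ℝ)*p + (N:ℝ)*t)))
      = Real.exp (-(l*((N:ℝ)*t))) * (∑ x, Real.exp (l * (g x - p)))^N := by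
    rw [Finset.sum_congr rfl (fun ω _ => expand ω), ← Finset.mul_sum]
    congr 1
    rw [Fintype.sum_pow]
  rw [sum_eq]
  have hbase0 : 0 ≤ ∑ x, Real.exp (l * (g x - p)) :=
    Finset.sum_nonneg fun x _ => (Real.exp_pos _).le
  calc Real.exp (-(l*((N:ℝ)*t))) * (∑ x, Real.exp (l * (g x - p)))^N
      ≤ Real.exp (-(l*((N:ℝ)*t))) * (v * Real.exp (l^2))^N := by
        apply mul_le_mul_of_nonneg_left _ (Real.exp_pos _).le
        exact pow_le_pow_left₀ hbase0 point N
    _ = v^N * Real.exp (-((N : ℝ) * t ^ 2) / 4) := by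
        rw [mul_pow, ← Real.exp_nat_mul, ← mul_assoc, mul_comm (Real.exp _) (v^N),
          mul_assoc, ← Real.exp_add]
        congr 1
        rw [hl]; ring

open MvPolynomial

noncomputable def decV (n : ℕ) (i : Fin (n+2)) : Fin (n+1) →₀ ℕ :=
  if h : (i : ℕ) < n+1 then Finsupp.single ⟨(i : ℕ), h⟩ 1 else 0

lemma mon_surj (n : ℕ) : ∀ (d : ℕ) (m : Fin (n+1) →₀ ℕ), (m.sum fun _ e => e) ≤ d →
    ∃ w : Fin d → Fin (n+2), (∑ j, decV n (w j)) = m := by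
  intro d
  induction d with
  | zero =>
    intro m hm
    rw [Nat.le_zero, Finsupp.sum] at hm
    have hall := Finset.sum_eq_zero_iff.1 hm
    have hm0 : m = 0 := by
      ext a
      by_cases ha : a ∈ m.support
      · simpa using hall a ha
      · simpa using Finsupp.notMem_support_iff.1 ha
    exact ⟨Fin.elim0, by simp [hm0]⟩
  | succ d ih =>
    intro m hm
    by_cases hm0 : m = 0
    · refine ⟨fun _ => Fin.last (n+1), ?_⟩
      have hd : decV n (Fin.last (n+1)) = 0 := by
        rw [decV, dif_neg]; simp [Fin.last]
      simp [hd, hm0]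
    · obtain ⟨i, hi⟩ : ∃ i, m i ≠ 0 := by
        by_contra h
        push_neg at h
        exact hm0 (Finsupp.ext fun a => by simp [h a])
      have hi1 : 1 ≤ m i := Nat.one_le_iff_ne_zero.2 hi
      set m' : Fin (n+1) →₀ ℕ := m - Finsupp.single i 1 with hm'
      have key : Finsupp.single i 1 + m' = m := by
        ext a
        rw [hm']
        by_cases ha : a = i
        · subst ha
          simp only [Finsupp.add_apply, Finsupp.tsub_apply, Finsupp.single_eq_same]
          omega
        · simp only [Finsupp.add_apply, Finsupp.tsub_apply,
            Finsupp.single_eq_of_ne' (Ne.symm ha)]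
          omega
      have hsum : (m'.sum fun _ e => e) ≤ d := by
        have h1 : (m.sum fun _ e => e) = ((Finsupp.single i 1).sum fun _ e => e) +
            (m'.sum fun _ e => e) := by
          rw [← key]
          exact Finsupp.sum_add_index' (fun a => rfl) (fun a b₁ b₂ => rfl)
        have h2 : ((Finsupp.single i 1).sum fun _ e => e) = 1 :=
          Finsupp.sum_single_index rfl
        omega
      obtain ⟨w', hw'⟩ := ih m' hsum
      refine ⟨Fin.cons (Fin.castSucc i) w', ?_⟩
      rw [Fin.sum_univ_succ]
      simp only [Fin.cons_zero, Fin.cons_succ]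
      have hdec : decV n (Fin.castSucc i) = Finsupp.single i 1 := by
        rw [decV, dif_pos (by simpa using i.isLt)]
        congr 1
      rw [hdec, hw', key]

lemma poly_finite_and_card (n d : ℕ) (F : Type) [CommSemiring F] [Fintype F] [DecidableEq F] :
    Finite {f : MvPolynomial (Fin (n+1)) F // f.totalDegree ≤ d} ∧
    Nat.card {f : MvPolynomial (Fin (n+1)) F // f.totalDegree ≤ d}
      ≤ (Fintype.card F)^((n+2)^d) := by
  set Φ : {f : MvPolynomial (Fin (n+1)) F // f.totalDegree ≤ d} →
      ((Fin d → Fin (n+2)) → F) := fun f w => MvPolynomial.coeff (∑ j, decV n (w j)) f.1 with hΦ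
  have hinj : Function.Injective Φ := by
    intro f g hfg
    ext1
    apply MvPolynomial.ext
    intro m
    by_cases hm : (m.sum fun _ e => e) ≤ d
    · obtain ⟨w, hw⟩ := mon_surj n d m hm
      have := congrFun hfg w
      rw [hΦ] at this
      simpa [hw] using this
    · have h1 : MvPolynomial.coeff m f.1 = 0 := by
        rw [← MvPolynomial.notMem_support_iff]
        intro hmem
        exact hm (le_trans (MvPolynomial.le_totalDegree hmem) f.2)
      have h2 : MvPolynomial.coeff m g.1 = 0 := by
        rw [← MvPolynomial.notMem_support_iff]
        intro hmem
        exact hm (le_trans (MvPolynomial.le_totalDegree hmem) g.2)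
      rw [h1, h2]
  have hfin : Finite {f : MvPolynomial (Fin (n+1)) F // f.totalDegree ≤ d} :=
    Finite.of_injective Φ hinj
  refine ⟨hfin, ?_⟩
  have := Nat.card_le_card_of_injective Φ hinj
  calc Nat.card {f : MvPolynomial (Fin (n+1)) F // f.totalDegree ≤ d}
      ≤ Nat.card ((Fin d → Fin (n+2)) → F) := this
    _ = (Fintype.card F)^((n+2)^d) := by
        rw [Nat.card_eq_fintype_card]
        simp [Fintype.card_fun]


lemma fiber_sum {α : Type} [Fintype α] {F : Type} [Fintype F] [DecidableEq F] (h : α → F) :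
    ∑ a : F, Nat.card {x : α // h x = a} = Fintype.card α := by
  classical
  have : ∀ a : F, Nat.card {x : α // h x = a}
      = (Finset.univ.filter (fun x => h x = a)).card := by
    intro a
    rw [Nat.card_eq_fintype_card, Fintype.card_subtype]
  rw [Finset.sum_congr rfl (fun a _ => this a)]
  exact (Finset.card_eq_sum_card_fiberwise (fun x _ => Finset.mem_univ (h x))).symm

lemma abs_est {Sx SN vr Nr t : ℝ} (hvr : 0 < vr) (hN : 0 < Nr)
    (h1 : SN < Nr * (Sx/vr) + Nr*t)
    (h2 : Nr - SN < Nr * (1 - Sx/vr) + Nr*t) :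
    |Sx/vr - SN/Nr| ≤ t := by
  rw [abs_le]
  constructor
  · have h : SN/Nr < Sx/vr + t := by
      rw [div_lt_iff₀ hN]
      nlinarith
    linarith
  · have h : Sx/vr - t < SN/Nr := by
      rw [lt_div_iff₀ hN]
      nlinarith
    linarith

lemma card_subtype_eq_sum {α : Type*} [Fintype α] (P : α → Prop) [DecidablePred P] :
    ((Nat.card {x : α // P x}) : ℝ) = ∑ x : α, (if P x then (1:ℝ) else 0) := by
  rw [Finset.sum_boole, Nat.card_eq_fintype_card, Fintype.card_subtype]

set_option maxHeartbeats 2000000 in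
theorem prg_for_low_degree_polynomials :
    ∃ C C' : ℝ, 0 < C ∧ 0 < C' ∧
      ∀ (n d : ℕ), 2 ≤ n → 1 ≤ d →
      ∀ ε : ℝ, 0 < ε →
      ∀ (F : Type) [Field F] [Fintype F],
        (d * (d - 1) + 1 ≤ ringChar F) →
        (C * ((d : ℝ) * 2 ^ d / ε + (d : ℝ) ^ 4 / ε ^ 2) ≤ (Fintype.card F : ℝ)) →
        ∃ (S : Type) (_ : Finite S) (_ : Nonempty S) (G : S → (Fin (n + 1) → F)),
          Real.logb 2 (Nat.card S) ≤
            C' * ((d : ℝ) * Real.logb 2 n + Real.logb 2 (Fintype.card F)) ∧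
          ∀ f : MvPolynomial (Fin (n + 1)) F, f.totalDegree ≤ d →
            (1 / 2 : ℝ) * ∑ a : F,
              |(Nat.card {x : Fin (n + 1) → F // eval x f = a} : ℝ) /
                  (Fintype.card F : ℝ) ^ (n + 1)
                - (Nat.card {s : S // eval (G s) f = a} : ℝ) / (Nat.card S : ℝ)| ≤ ε := by
  classical
  refine ⟨4, 8, by norm_num, by norm_num, ?_⟩
  intro n d hn hd ε hε F _ _ _hchar hq
  set q : ℕ := Fintype.card F with hqdef
  have hq2 : 2 ≤ q := Fintype.one_lt_card
  have hqR1 : (1:ℝ) ≤ q := by exact_mod_cast le_trans (by norm_num) hq2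
  have hqR0 : (0:ℝ) < q := lt_of_lt_of_le one_pos hqR1
  have hnR : (2:ℝ) ≤ n := by exact_mod_cast hn
  have hdR : (1:ℝ) ≤ d := by exact_mod_cast hd
  have hlogn : 0 ≤ Real.logb 2 n := Real.logb_nonneg one_lt_two (by linarith)
  have hlogq : 0 ≤ Real.logb 2 q := Real.logb_nonneg one_lt_two hqR1
  by_cases hε1 : 1 ≤ ε
  · -- trivial singleton generator
    refine ⟨Unit, inferInstance, inferInstance, fun _ _ => 0, ?_, ?_⟩
    · simp only [Nat.card_unique, Nat.cast_one, Real.logb_one]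
      positivity
    · intro f _
      have key : ∑ a : F,
          |(Nat.card {x : Fin (n + 1) → F // eval x f = a} : ℝ) /
              (Fintype.card F : ℝ) ^ (n + 1)
            - (Nat.card {s : Unit // eval ((fun (_ : Unit) (_ : Fin (n+1)) => (0:F)) s) f = a} : ℝ)
              / (Nat.card Unit : ℝ)| ≤ 2 := by
        have h1 : ∑ a : F, ((Nat.card {x : Fin (n + 1) → F // eval x f = a} : ℝ) /
            (Fintype.card F : ℝ) ^ (n + 1)) = 1 := by
          rw [← Finset.sum_div]
          rw [div_eq_one_iff_eq (by positivity)]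
          rw [← Nat.cast_sum]
          rw [fiber_sum (fun x : Fin (n+1) → F => eval x f)]
          push_cast
          rw [Fintype.card_fun]
          simp
        have h2 : ∑ a : F, ((Nat.card {s : Unit // eval ((fun (_ : Unit) (_ : Fin (n+1)) => (0:F)) s) f = a} : ℝ)
            / (Nat.card Unit : ℝ)) = 1 := by
          simp only [Nat.card_unique, Nat.cast_one, div_one]
          rw [← Nat.cast_sum]
          rw [fiber_sum (fun s : Unit => eval ((fun (_ : Unit) (_ : Fin (n+1)) => (0:F)) s) f)]
          simp
        calc ∑ a : F, |_ - _| ≤ ∑ a : F, (((Nat.card {x : Fin (n + 1) → F // eval x f = a} : ℝ) /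
              (Fintype.card F : ℝ) ^ (n + 1)) +
              ((Nat.card {s : Unit // eval ((fun (_ : Unit) (_ : Fin (n+1)) => (0:F)) s) f = a} : ℝ)
              / (Nat.card Unit : ℝ))) := by
              refine Finset.sum_le_sum fun a _ => ?_
              refine le_trans (abs_sub _ _) ?_
              rw [abs_of_nonneg (by positivity), abs_of_nonneg (by positivity)]
          _ = 2 := by rw [Finset.sum_add_distrib, h1, h2]; norm_num
      linarith [key]
  · push_neg at hε1
    have hFne : Nonempty F := ⟨0⟩
    have hVne : Nonempty (Fin (n+1) → F) := ⟨fun _ => 0⟩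
    have hVcard : (Fintype.card (Fin (n+1) → F) : ℝ) = (q:ℝ)^(n+1) := by
      rw [Fintype.card_fun, Fintype.card_fin]
      push_cast
      rfl
    have hvr0 : (0:ℝ) < (Fintype.card (Fin (n+1) → F) : ℝ) := by rw [hVcard]; positivity
    set B : ℕ := (n+2)^d with hBdef
    set N : ℕ := q^4 * (B+1) with hNdef
    have hN0 : 0 < N := by positivity
    have hNR0 : (0:ℝ) < N := by exact_mod_cast hN0
    set t : ℝ := ε / q with htdef
    have ht0 : 0 ≤ t := by positivity
    have ht1 : t ≤ 1 := by rw [htdef, div_le_one hqR0]; linarith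
    have ht2 : t ≤ 2 := le_trans ht1 one_le_two
    -- numeric consequences of the field-size hypothesis
    have h2d0 : (0:ℝ) < 2^d := by positivity
    have hterm1 : (2:ℝ)^d ≤ (d:ℝ) * 2^d / ε := by
      rw [le_div_iff₀ hε]
      nlinarith
    have hterm2 : (0:ℝ) ≤ (d:ℝ)^4/ε^2 := by positivity
    have hq2d : (2:ℝ)^(d+2) ≤ q := by
      have h1 : (4:ℝ) * (2^d) ≤ 4 * ((d:ℝ) * 2^d / ε + (d:ℝ)^4/ε^2) := by nlinarith
      have h2 : (2:ℝ)^(d+2) = 4 * 2^d := by rw [pow_add]; ring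
      rw [h2]; exact le_trans h1 hq
    have hqε2 : (4:ℝ) ≤ q * ε^2 := by
      have hterm0 : (0:ℝ) ≤ (d:ℝ) * 2^d / ε := by positivity
      have h1 : (4:ℝ) * ((d:ℝ)^4/ε^2) ≤ q := by nlinarith
      have hd4 : (1:ℝ) ≤ (d:ℝ)^4 := one_le_pow₀ hdR
      have hε2 : (0:ℝ) < ε^2 := by positivity
      have h2 := mul_le_mul_of_nonneg_right h1 hε2.le
      have hid : 4 * ((d:ℝ)^4/ε^2) * ε^2 = 4 * (d:ℝ)^4 := by field_simp
      rw [hid] at h2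
      linarith
    have hqR4 : (4:ℝ) ≤ q := by
      have hε2le : ε^2 ≤ 1 := pow_le_one₀ hε.le hε1.le
      have h3 : (q:ℝ)*ε^2 ≤ (q:ℝ)*1 := mul_le_mul_of_nonneg_left hε2le hqR0.le
      linarith
    -- the test functions
    set g : MvPolynomial (Fin (n+1)) F → F → (Fin (n+1) → F) → ℝ :=
      fun f a x => if eval x f = a then (1:ℝ) else 0 with hgdef
    have hg0 : ∀ f a x, 0 ≤ g f a x := by
      intro f a x; rw [hgdef]; dsimp only; split <;> norm_num
    have hg1 : ∀ f a x, g f a x ≤ 1 := by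
      intro f a x; rw [hgdef]; dsimp only; split <;> norm_num
    -- the finite set of polynomials
    obtain ⟨hPfin, hPcard⟩ := poly_finite_and_card n d F
    have hPsetfin : {f : MvPolynomial (Fin (n+1)) F | f.totalDegree ≤ d}.Finite :=
      Set.finite_coe_iff.mp hPfin
    set PF := hPsetfin.toFinset with hPFdef
    have hPFcard : (PF.card : ℝ) ≤ (q:ℝ)^B := by
      have h1 : PF.card = Nat.card {f : MvPolynomial (Fin (n+1)) F // f.totalDegree ≤ d} := by
        rw [hPFdef, ← Set.ncard_eq_toFinset_card _ hPsetfin]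
        exact (Nat.card_coe_set_eq _).symm
      rw [h1]
      exact_mod_cast hPcard
    -- bad sets
    set Bad1 : MvPolynomial (Fin (n+1)) F → F → Finset (Fin N → (Fin (n+1) → F)) := fun f a =>
      Finset.univ.filter (fun ω : Fin N → (Fin (n+1) → F) =>
        (N : ℝ) * ((∑ x, g f a x) / (Fintype.card (Fin (n+1) → F) : ℝ)) + (N : ℝ) * t
          ≤ ∑ i, g f a (ω i)) with hBad1def
    set Bad2 : MvPolynomial (Fin (n+1)) F → F → Finset (Fin N → (Fin (n+1) → F)) := fun f a =>
      Finset.univ.filter (fun ω : Fin N → (Fin (n+1) → F) =>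
        (N : ℝ) * ((∑ x, (1 - g f a x)) / (Fintype.card (Fin (n+1) → F) : ℝ)) + (N : ℝ) * t
          ≤ ∑ i, (1 - g f a (ω i))) with hBad2def
    set Bad : Finset (Fin N → (Fin (n+1) → F)) :=
      PF.biUnion (fun f => Finset.univ.biUnion (fun a : F => Bad1 f a ∪ Bad2 f a)) with hBaddef
    set β : ℝ := (Fintype.card (Fin (n+1) → F) : ℝ)^N * Real.exp (-((N:ℝ) * t^2)/4) with hβdef
    have hβ0 : 0 ≤ β := by rw [hβdef]; positivity
    have hBad1card : ∀ f a, ((Bad1 f a).card : ℝ) ≤ β := by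
      intro f a
      rw [hBad1def, hβdef]
      exact chernoff_count N (g f a) (hg0 f a) (hg1 f a) ht0 ht2
    have hBad2card : ∀ f a, ((Bad2 f a).card : ℝ) ≤ β := by
      intro f a
      rw [hBad2def, hβdef]
      exact chernoff_count N (fun x => 1 - g f a x)
        (fun x => by show (0:ℝ) ≤ 1 - g f a x; linarith [hg1 f a x])
        (fun x => by show 1 - g f a x ≤ (1:ℝ); linarith [hg0 f a x]) ht0 ht2
    -- union bound
    have hBadcard : (Bad.card : ℝ) ≤ (PF.card : ℝ) * q * (2*β) := by
      have h1 : Bad.card ≤ ∑ f ∈ PF, ∑ a : F, ((Bad1 f a).card + (Bad2 f a).card) := by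
        refine le_trans (Finset.card_biUnion_le) (Finset.sum_le_sum fun f _ => ?_)
        refine le_trans (Finset.card_biUnion_le) (Finset.sum_le_sum fun a _ => ?_)
        exact Finset.card_union_le _ _
      have h2 : ((∑ f ∈ PF, ∑ a : F, ((Bad1 f a).card + (Bad2 f a).card) : ℕ) : ℝ)
          ≤ ∑ _f ∈ PF, ∑ _a : F, (2*β) := by
        push_cast
        refine Finset.sum_le_sum fun f _ => Finset.sum_le_sum fun a _ => ?_
        have := hBad1card f a
        have := hBad2card f a
        linarith
      have h3 : (∑ _f ∈ PF, ∑ _a : F, (2*β)) = (PF.card : ℝ) * q * (2*β) := by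
        rw [Finset.sum_const, Finset.sum_const, Finset.card_univ]
        simp only [nsmul_eq_mul]
        rw [hqdef]
        ring
      calc (Bad.card : ℝ) ≤ _ := by exact_mod_cast Nat.cast_le.2 h1
        _ ≤ _ := h2
        _ = _ := h3
    -- strict inequality
    have hNt : (q:ℝ) * ((B:ℝ)+1) ≤ (N:ℝ) * t^2 / 4 := by
      have hN' : (N:ℝ) = (q:ℝ)^4 * ((B:ℝ)+1) := by rw [hNdef]; push_cast; ring
      have ht' : t^2 = ε^2 / (q:ℝ)^2 := by rw [htdef]; field_simp
      rw [hN', ht']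
      have hB0 : (0:ℝ) ≤ (B:ℝ) := Nat.cast_nonneg B
      have key : (q:ℝ)^4 * ((B:ℝ)+1) * (ε^2/(q:ℝ)^2) / 4
          = ((q:ℝ) * ((B:ℝ)+1)) * ((q:ℝ) * ε^2 / 4) := by field_simp
      rw [key]
      nlinarith [mul_pos hqR0 (by linarith : (0:ℝ) < (B:ℝ)+1)]
    have hexp2q : 2*(q:ℝ) < Real.exp q := by
      have hs : Real.exp (q:ℝ) = Real.exp ((q:ℝ)/2) * Real.exp ((q:ℝ)/2) := by
        rw [← Real.exp_add]; ring_nf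
      have h := Real.add_one_le_exp ((q:ℝ)/2)
      nlinarith
    have hmain : (PF.card : ℝ) * q * (2*β) < (Fintype.card (Fin (n+1) → F):ℝ)^N := by
      have hE : Real.exp (-((N:ℝ) * t^2)/4) ≤ Real.exp (-((q:ℝ) * ((B:ℝ)+1))) := by
        apply Real.exp_le_exp.2
        have : -((N:ℝ) * t^2)/4 = -((N:ℝ) * t^2/4) := by ring
        rw [this]
        linarith
      have hpow : (2*(q:ℝ))^(B+1) < Real.exp ((q:ℝ) * ((B:ℝ)+1)) := by
        have h1 : (2*(q:ℝ))^(B+1) < (Real.exp q)^(B+1) :=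
          pow_lt_pow_left₀ hexp2q (by linarith) (Nat.succ_ne_zero B)
        have h2 : (Real.exp q)^(B+1) = Real.exp ((q:ℝ) * ((B:ℝ)+1)) := by
          rw [← Real.exp_nat_mul]
          congr 1
          push_cast
          ring
        linarith
      have hfactor : (PF.card : ℝ) * q * 2 * Real.exp (-((q:ℝ) * ((B:ℝ)+1))) < 1 := by
        have h1 : (PF.card : ℝ) * q * 2 ≤ (2*(q:ℝ))^(B+1) := by
          have h2 : (2*(q:ℝ))^(B+1) = 2^(B+1) * ((q:ℝ)^B * q) := by
            rw [mul_pow]; ring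
          have h3 : (2:ℝ) ≤ 2^(B+1) := by
            calc (2:ℝ) = 2^1 := (pow_one 2).symm
              _ ≤ 2^(B+1) := pow_le_pow_right₀ one_le_two (by omega)
          have hqB : (0:ℝ) < (q:ℝ)^B := by positivity
          rw [h2]
          have h4 : (PF.card:ℝ)*q ≤ (q:ℝ)^B*q := mul_le_mul_of_nonneg_right hPFcard hqR0.le
          calc (PF.card:ℝ)*q*2 ≤ ((q:ℝ)^B*q)*2 :=
                mul_le_mul_of_nonneg_right h4 (by norm_num)
            _ ≤ ((q:ℝ)^B*q)*2^(B+1) := mul_le_mul_of_nonneg_left h3 (by positivity)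
            _ = 2^(B+1) * ((q:ℝ)^B*q) := by ring
        have hE0 : (0:ℝ) < Real.exp (-((q:ℝ) * ((B:ℝ)+1))) := Real.exp_pos _
        calc (PF.card : ℝ) * q * 2 * Real.exp (-((q:ℝ) * ((B:ℝ)+1)))
            ≤ (2*(q:ℝ))^(B+1) * Real.exp (-((q:ℝ) * ((B:ℝ)+1))) := by
              exact mul_le_mul_of_nonneg_right h1 hE0.le
          _ < Real.exp ((q:ℝ) * ((B:ℝ)+1)) * Real.exp (-((q:ℝ) * ((B:ℝ)+1))) := by
              exact mul_lt_mul_of_pos_right hpow hE0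
          _ = 1 := by rw [← Real.exp_add]; simp
      have hvN : (0:ℝ) < (Fintype.card (Fin (n+1) → F):ℝ)^N := by positivity
      calc (PF.card : ℝ) * q * (2*β)
          = ((PF.card : ℝ) * q * 2 * Real.exp (-((N:ℝ) * t^2)/4)) * (Fintype.card (Fin (n+1) → F):ℝ)^N := by
            rw [hβdef]; ring
        _ ≤ ((PF.card : ℝ) * q * 2 * Real.exp (-((q:ℝ) * ((B:ℝ)+1)))) * (Fintype.card (Fin (n+1) → F):ℝ)^N := by
            have hc0 : (0:ℝ) ≤ (PF.card : ℝ) * q * 2 := by positivity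
            exact mul_le_mul_of_nonneg_right
              (mul_le_mul_of_nonneg_left hE hc0) hvN.le
        _ < 1 * (Fintype.card (Fin (n+1) → F):ℝ)^N := mul_lt_mul_of_pos_right hfactor hvN
        _ = (Fintype.card (Fin (n+1) → F):ℝ)^N := one_mul _
    -- a good seed exists
    obtain ⟨G, hG⟩ : ∃ ω : Fin N → (Fin (n+1) → F), ω ∉ Bad := by
      by_contra hcon
      push_neg at hcon
      have hsub : (Finset.univ : Finset (Fin N → (Fin (n+1) → F))) ⊆ Bad := fun ω _ => hcon ω
      have hcard := Finset.card_le_card hsub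
      rw [Finset.card_univ, Fintype.card_fun] at hcard
      have : ((Fintype.card (Fin (n+1) → F) ^ Fintype.card (Fin N) : ℕ) : ℝ) ≤ (Bad.card : ℝ) := by
        exact_mod_cast hcard
      rw [Fintype.card_fin] at this
      push_cast at this
      linarith [lt_of_le_of_lt (le_trans this hBadcard) hmain]
    refine ⟨Fin N, inferInstance, ⟨⟨0, hN0⟩⟩, G, ?_, ?_⟩
    · -- seed length
      have hcard : (Nat.card (Fin N) : ℝ) = (N:ℝ) := by
        rw [Nat.card_eq_fintype_card, Fintype.card_fin]
      rw [hcard]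
      have hNle : (N:ℝ) ≤ (q:ℝ)^5 * (n:ℝ)^d := by
        have hB1 : ((B:ℝ)+1) ≤ 2^(d+1) * (n:ℝ)^d := by
          have h1 : (n+2)^d ≤ 2^d * n^d := by
            calc (n+2)^d ≤ (2*n)^d := Nat.pow_le_pow_left (by omega) d
              _ = 2^d * n^d := by rw [mul_pow]
          have h2 : 0 < 2^d * n^d := by positivity
          have h3 : (n+2)^d + 1 ≤ 2^(d+1) * n^d := by
            have : 2^(d+1) * n^d = 2^d * n^d + 2^d * n^d := by ring
            omega
          calc ((B:ℝ)+1) = (((n+2)^d + 1 : ℕ) : ℝ) := by rw [hBdef]; push_cast; ring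
            _ ≤ ((2^(d+1) * n^d : ℕ) : ℝ) := by exact_mod_cast h3
            _ = 2^(d+1) * (n:ℝ)^d := by push_cast; ring
        have h2q : (2:ℝ)^(d+1) ≤ q := by
          calc (2:ℝ)^(d+1) ≤ 2^(d+2) := pow_le_pow_right₀ one_le_two (by omega)
            _ ≤ q := hq2d
        have hnd0 : (0:ℝ) ≤ (n:ℝ)^d := by positivity
        calc (N:ℝ) = (q:ℝ)^4 * ((B:ℝ)+1) := by rw [hNdef]; push_cast; ring
          _ ≤ (q:ℝ)^4 * (2^(d+1) * (n:ℝ)^d) :=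
              mul_le_mul_of_nonneg_left hB1 (by positivity)
          _ ≤ (q:ℝ)^4 * ((q:ℝ) * (n:ℝ)^d) :=
              mul_le_mul_of_nonneg_left
                (mul_le_mul_of_nonneg_right h2q hnd0) (by positivity)
          _ = (q:ℝ)^5 * (n:ℝ)^d := by ring
      have hlog1 : Real.logb 2 (N:ℝ) ≤ Real.logb 2 ((q:ℝ)^5 * (n:ℝ)^d) :=
        Real.logb_le_logb_of_le one_lt_two hNR0 hNle
      have hlog2 : Real.logb 2 ((q:ℝ)^5 * (n:ℝ)^d)
          = 5 * Real.logb 2 q + d * Real.logb 2 n := by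
        rw [Real.logb_mul (by positivity) (by positivity),
          Real.logb_pow, Real.logb_pow]
        push_cast
        ring
      have hdlogn : 0 ≤ (d:ℝ) * Real.logb 2 n := by positivity
      calc Real.logb 2 (N:ℝ) ≤ 5 * Real.logb 2 q + d * Real.logb 2 n := by
            rw [← hlog2]; exact hlog1
        _ ≤ 8 * ((d:ℝ) * Real.logb 2 n + Real.logb 2 q) := by
            rw [hqdef] at hlogq ⊢
            linarith
    · -- statistical distance bound
      intro f hf
      have hfPF : f ∈ PF := by
        rw [hPFdef, Set.Finite.mem_toFinset]
        exact hf
      have hgood : ∀ a : F, G ∉ Bad1 f a ∧ G ∉ Bad2 f a := by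
        intro a
        constructor
        · intro hc
          exact hG (Finset.mem_biUnion.2 ⟨f, hfPF, Finset.mem_biUnion.2
            ⟨a, Finset.mem_univ a, Finset.mem_union_left _ hc⟩⟩)
        · intro hc
          exact hG (Finset.mem_biUnion.2 ⟨f, hfPF, Finset.mem_biUnion.2
            ⟨a, Finset.mem_univ a, Finset.mem_union_right _ hc⟩⟩)
      have key : ∀ a : F, |(Nat.card {x : (Fin (n+1) → F) // eval x f = a} : ℝ) / (Fintype.card F:ℝ)^(n+1)
          - (Nat.card {s : Fin N // eval (G s) f = a} : ℝ) / (N:ℝ)| ≤ t := by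
        intro a
        obtain ⟨h1, h2⟩ := hgood a
        rw [hBad1def] at h1
        rw [hBad2def] at h2
        simp only [Finset.mem_filter, Finset.mem_univ, true_and, not_le] at h1 h2
        have hSg' : ∑ i : Fin N, (1 - g f a (G i)) = (N:ℝ) - ∑ i, g f a (G i) := by
          rw [Finset.sum_sub_distrib, Finset.sum_const, Finset.card_univ, Fintype.card_fin]
          simp [nsmul_eq_mul]
        have hSx' : ∑ x, (1 - g f a x)
            = (Fintype.card (Fin (n+1) → F) : ℝ) - ∑ x, g f a x := by
          rw [Finset.sum_sub_distrib, Finset.sum_const, Finset.card_univ]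
          simp [nsmul_eq_mul]
        rw [hSg', hSx'] at h2
        have hp' : ((Fintype.card (Fin (n+1) → F):ℝ) - ∑ x, g f a x)
              /(Fintype.card (Fin (n+1) → F):ℝ)
            = 1 - (∑ x, g f a x)/(Fintype.card (Fin (n+1) → F):ℝ) := by field_simp
        rw [hp'] at h2
        have habs : |(∑ x, g f a x)/(Fintype.card (Fin (n+1) → F):ℝ)
            - (∑ i, g f a (G i))/(N:ℝ)| ≤ t := abs_est hvr0 hNR0 h1 h2
        have hc1 : (Nat.card {x : (Fin (n+1) → F) // eval x f = a} : ℝ)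
            = ∑ x, g f a x := by
          simp only [hgdef, Finset.sum_boole, Nat.card_eq_fintype_card,
            Fintype.card_subtype]
        have hc2 : (Nat.card {s : Fin N // eval (G s) f = a} : ℝ)
            = ∑ i, g f a (G i) := by
          simp only [hgdef, Finset.sum_boole, Nat.card_eq_fintype_card,
            Fintype.card_subtype]
        rw [hc1, hc2, ← hqdef, ← hVcard]
        exact habs
      have hNS : (Nat.card (Fin N) : ℝ) = (N:ℝ) := by
        rw [Nat.card_eq_fintype_card, Fintype.card_fin]
      calc (1 / 2 : ℝ) * ∑ a : F,
            |(Nat.card {x : Fin (n + 1) → F // eval x f = a} : ℝ) / (Fintype.card F : ℝ) ^ (n + 1)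
              - (Nat.card {s : Fin N // eval (G s) f = a} : ℝ) / (Nat.card (Fin N) : ℝ)|
          ≤ (1/2 : ℝ) * ∑ _a : F, t := by
            have hle : ∀ a : F, |(Nat.card {x : Fin (n + 1) → F // eval x f = a} : ℝ)
                / (Fintype.card F : ℝ) ^ (n + 1)
                - (Nat.card {s : Fin N // eval (G s) f = a} : ℝ) / (Nat.card (Fin N) : ℝ)| ≤ t := by
              intro a
              rw [hNS]
              exact key a
            have := Finset.sum_le_sum (fun a (_ : a ∈ Finset.univ) => hle a)
            linarith
        _ = (1/2 : ℝ) * ((q:ℝ) * t) := by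
            rw [Finset.sum_const, Finset.card_univ, nsmul_eq_mul, hqdef]
        _ = ε / 2 := by
            rw [htdef]
            field_simp
        _ ≤ ε := by linarith
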